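/- Let E be a real Hilbert space, let μ > 0, let A : E → E be a linear map satisfying ⟨−A x, x⟩ ≥ μ ‖x‖² for all x ∈ E, let T > 0, and let u : [0, T] → E be continuous. Suppose f : [0, T] → E is differentiable with continuous derivative, f(0) = 0, and f′(t) = u(t) + A f(t) for all t ∈ [0, T]. Then ∫₀ᵀ ⟨f(t), u(t)⟩ dt ≥ μ ∫₀ᵀ ‖f(t)‖² dt. -/

import Mathlib

open scoped RealInnerProductSpace

/-- If `⟨-A x, x⟩ ≥ μ ‖x‖²` for all `x`, `f(0) = 0` and
`f′(t) = u(t) + A f(t)` on `[0, T]` (with `u` and `f′` continuous), then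
`∫₀ᵀ ⟨f(t), u(t)⟩ dt ≥ μ ∫₀ᵀ ‖f(t)‖² dt`. -/
theorem coercivity_integral_estimate
    {E : Type*} [NormedAddCommGroup E] [InnerProductSpace ℝ E] [CompleteSpace E]
    (μ : ℝ) (hμ : 0 < μ)
    (A : E →ₗ[ℝ] E) (hA : ∀ x : E, μ * ‖x‖ ^ 2 ≤ ⟪-A x, x⟫)
    (T : ℝ) (hT : 0 < T)
    (u f f' : ℝ → E)
    (hu : ContinuousOn u (Set.Icc 0 T))
    (hf' : ∀ t ∈ Set.Icc 0 T, HasDerivAt f (f' t) t)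
    (hf'cont : ContinuousOn f' (Set.Icc 0 T))
    (hf0 : f 0 = 0)
    (heq : ∀ t ∈ Set.Icc 0 T, f' t = u t + A (f t)) :
    μ * ∫ t in (0:ℝ)..T, ‖f t‖ ^ 2 ≤ ∫ t in (0:ℝ)..T, ⟪f t, u t⟫ := by
  have hTle : (0:ℝ) ≤ T := hT.le
  have huIcc : Set.uIcc (0:ℝ) T = Set.Icc 0 T := Set.uIcc_of_le hTle
  have hfc : ContinuousOn f (Set.Icc 0 T) := fun t ht =>
    (hf' t ht).continuousAt.continuousWithinAt
  have hg : ContinuousOn (fun t => ⟪f t, f' t⟫) (Set.Icc 0 T) := hfc.inner hf'cont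
  have hN : ContinuousOn (fun t => μ * ‖f t‖ ^ 2) (Set.Icc 0 T) :=
    (continuous_const.continuousOn).mul ((hfc.norm).pow 2)
  have hfu : ContinuousOn (fun t => ⟪f t, u t⟫) (Set.Icc 0 T) := hfc.inner hu
  have hIg : IntervalIntegrable (fun t => ⟪f t, f' t⟫) MeasureTheory.volume 0 T :=
    (huIcc ▸ hg).intervalIntegrable
  have hIN : IntervalIntegrable (fun t => μ * ‖f t‖ ^ 2) MeasureTheory.volume 0 T :=
    (huIcc ▸ hN).intervalIntegrable
  have hIfu : IntervalIntegrable (fun t => ⟪f t, u t⟫) MeasureTheory.volume 0 T :=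
    (huIcc ▸ hfu).intervalIntegrable
  -- FTC: ∫ ⟪f, f'⟫ = ‖f T‖²/2 - ‖f 0‖²/2
  have key : ∫ t in (0:ℝ)..T, ⟪f t, f' t⟫ = ‖f T‖ ^ 2 / 2 - ‖f 0‖ ^ 2 / 2 := by
    apply intervalIntegral.integral_eq_sub_of_hasDerivAt
      (f := fun t => ‖f t‖ ^ 2 / 2)
    · intro t ht
      rw [huIcc] at ht
      have h1 := ((hf' t ht).inner ℝ (hf' t ht)).div_const 2
      have : (⟪f t, f' t⟫ + ⟪f' t, f t⟫) / 2 = ⟪f t, f' t⟫ := by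
        rw [real_inner_comm (f' t) (f t)]; ring
      rw [this] at h1
      simp only [real_inner_self_eq_norm_sq] at h1
      exact h1
    · exact hIg
  -- pointwise estimate
  have hpt : ∀ t ∈ Set.Icc (0:ℝ) T,
      μ * ‖f t‖ ^ 2 + ⟪f t, f' t⟫ ≤ ⟪f t, u t⟫ := by
    intro t ht
    have hut : u t = f' t - A (f t) := by rw [heq t ht]; abel
    have h2 : ⟪f t, u t⟫ = ⟪f t, f' t⟫ + ⟪-A (f t), f t⟫ := by
      rw [hut, inner_sub_right, inner_neg_left, real_inner_comm (f t) (A (f t))]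
      ring
    rw [h2]
    have := hA (f t)
    linarith
  have hmono : ∫ t in (0:ℝ)..T, (μ * ‖f t‖ ^ 2 + ⟪f t, f' t⟫)
      ≤ ∫ t in (0:ℝ)..T, ⟪f t, u t⟫ := by
    apply intervalIntegral.integral_mono_on hTle (hIN.add hIg) hIfu hpt
  rw [intervalIntegral.integral_add hIN hIg, intervalIntegral.integral_const_mul,
    key, hf0, norm_zero] at hmono
  have := sq_nonneg ‖f T‖
  simp only [ne_eq, OfNat.ofNat_ne_zero, not_false_eq_true, zero_pow] at hmono
  linarith
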